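/- (Achievability II.) Fix a prime q, integers d ≥ 2 and r ≥ 1, reals ε and η with 0 ≤ ε < η < (q−1)/q, and a real constant C₂ > 1. Set γ = (ln q) / ( 2·((q−1)/q − η)² ). For each n ≥ 1, let T*_n be any (n;d)-tensor over 𝔽_q of rank at most r, let m(n) be an integer with m(n) ≥ C₂·γ·n·r·d, take i.i.d. uniform sensing tensors M^{(1)},…,M^{(m(n))}, noisy observations ỹ = y_{T*_n} + z through the q-ary symmetric channel with error probability ε, and threshold τ_n = ⌊η·m(n)⌋. Let E_n be the event that d_H(y_{T*_n}, ỹ) > τ_n or that some tensor T ≠ T*_n of rank at most r satisfies d_H(y_T, ỹ) ≤ τ_n. Then Pr(E_n) → 0 as n → ∞. -/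

import Mathlib

open scoped Classical

/-- An `(n;d)`-tensor over `𝔽_q`: a map `[n]^d → 𝔽_q`. -/
abbrev Tensor (q n d : ℕ) := (Fin d → Fin n) → ZMod q

/-- `T` has rank at most `r` if it is a sum of `r` outer products of vectors. -/
def rankLE (q n d r : ℕ) (T : Tensor q n d) : Prop :=
  ∃ u : Fin r → Fin d → (Fin n → ZMod q),
    ∀ idx : Fin d → Fin n, T idx = ∑ i : Fin r, ∏ j : Fin d, u i j (idx j)

/-- The tensor inner product `⟨M, T⟩ = Σ_idx M(idx)·T(idx)`. -/
def tinner {q n d : ℕ} [Fact q.Prime] (M T : Tensor q n d) : ZMod q :=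
  ∑ idx : Fin d → Fin n, M idx * T idx

/-- Probability weight of a noise symbol of the `q`-ary symmetric channel with error
probability `ε`. -/
noncomputable def noiseW (q : ℕ) [Fact q.Prime] (ε : ℝ) (z : ZMod q) : ℝ :=
  if z = 0 then 1 - ε else ε / ((q : ℝ) - 1)


lemma quad_le_quarter (x : ℝ) : x * (1 - x) ≤ 1/4 := by nlinarith [sq_nonneg (2*x - 1)]

lemma bernoulli_mgf_le (p : ℝ) (hp0 : 0 ≤ p) (hp1 : p ≤ 1) (t : ℝ) :
    1 - p + p * Real.exp t ≤ Real.exp (p * t + t ^ 2 / 8) := by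
  rcases eq_or_lt_of_le hp0 with h0 | hp0'
  · simp only [← h0, zero_mul, sub_zero, zero_add]
    have : (0:ℝ) ≤ t^2/8 := by positivity
    simpa using Real.one_le_exp this
  rcases eq_or_lt_of_le hp1 with h1 | hp1'
  · subst h1
    simp only [sub_self, one_mul, zero_add]
    have : t ≤ t + t^2/8 := by nlinarith [sq_nonneg t]
    simpa using Real.exp_le_exp.mpr this
  -- now 0 < p < 1
  set φ : ℝ → ℝ := fun t => 1 - p + p * Real.exp t with hφ
  have hφpos : ∀ s, 0 < φ s := by
    intro s
    have : 0 < p * Real.exp s := by positivity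
    simp only [hφ]
    nlinarith
  have hφd : ∀ s, HasDerivAt φ (p * Real.exp s) s := by
    intro s
    exact ((Real.hasDerivAt_exp s).const_mul p).const_add (1 - p)
  set u : ℝ → ℝ := fun s => p * Real.exp s / φ s with hu
  have hud : ∀ s, HasDerivAt u (u s * (1 - u s)) s := by
    intro s
    have h1 : HasDerivAt (fun s => p * Real.exp s) (p * Real.exp s) s :=
      (Real.hasDerivAt_exp s).const_mul p
    have h2 := (h1.div (hφd s) (hφpos s).ne')
    refine h2.congr_deriv ?_
    have hne := (hφpos s).ne'
    simp only [hu]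
    field_simp
  set h : ℝ → ℝ := fun s => p + s / 4 - u s with hh
  have hhd : ∀ s, HasDerivAt h (1/4 - u s * (1 - u s)) s := by
    intro s
    have : HasDerivAt (fun s : ℝ => p + s / 4) (1/4) s := by
      simpa using ((hasDerivAt_id s).div_const 4).const_add p
    exact this.sub (hud s)
  have hmono : Monotone h := by
    apply monotone_of_deriv_nonneg (fun s => (hhd s).differentiableAt)
    intro s
    rw [(hhd s).deriv]
    have := quad_le_quarter (u s)
    linarith
  have hu0 : u 0 = p := by simp [hu, hφ]
  have hh0 : h 0 = 0 := by simp [hh, hu0]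
  set g : ℝ → ℝ := fun s => p * s + s ^ 2 / 8 - Real.log (φ s) with hg
  have hgd : ∀ s, HasDerivAt g (h s) s := by
    intro s
    have h1 : HasDerivAt (fun s : ℝ => p * s + s ^ 2 / 8) (p + s / 4) s := by
      have := ((hasDerivAt_pow 2 s).div_const 8).const_add (p * s)
      have h2 : HasDerivAt (fun x : ℝ => p * x) p s := by
        simpa using (hasDerivAt_id s).const_mul p
      have h3 := h2.add ((hasDerivAt_pow 2 s).div_const 8)
      refine h3.congr_deriv ?_
      norm_num
      ring
    have h4 : HasDerivAt (fun s => Real.log (φ s)) (p * Real.exp s / φ s) s :=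
      (hφd s).log (hφpos s).ne'
    exact h1.sub h4
  have hg0 : g 0 = 0 := by simp [hg, hφ]
  have hgnn : ∀ s, 0 ≤ g s := by
    intro s
    rcases le_or_gt 0 s with hs | hs
    · have hmon : MonotoneOn g (Set.Ici 0) := by
        apply monotoneOn_of_deriv_nonneg (convex_Ici 0)
          (Continuous.continuousOn (by
            have : Differentiable ℝ g := fun x => (hgd x).differentiableAt
            exact this.continuous))
        · intro x _
          exact (hgd x).differentiableAt.differentiableWithinAt
        · intro x hx
          rw [(hgd x).deriv]
          rw [interior_Ici] at hx
          have := hmono (le_of_lt hx)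
          rw [hh0] at this
          linarith
      have := hmon (Set.self_mem_Ici) (Set.mem_Ici.mpr hs) hs
      linarith [hg0]
    · have hant : AntitoneOn g (Set.Iic 0) := by
        apply antitoneOn_of_deriv_nonpos (convex_Iic 0)
          (Continuous.continuousOn (by
            have : Differentiable ℝ g := fun x => (hgd x).differentiableAt
            exact this.continuous))
        · intro x _
          exact (hgd x).differentiableAt.differentiableWithinAt
        · intro x hx
          rw [(hgd x).deriv]
          rw [interior_Iic] at hx
          have := hmono (le_of_lt hx)
          rw [hh0] at this
          linarith
      have := hant (Set.mem_Iic.mpr hs.le) (Set.self_mem_Iic) hs.le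
      linarith [hg0]
  have := hgnn t
  have hlog : Real.log (φ t) ≤ p * t + t ^ 2 / 8 := by
    have h2 := hgnn t
    simp only [hg] at h2
    linarith
  calc 1 - p + p * Real.exp t = φ t := rfl
    _ = Real.exp (Real.log (φ t)) := (Real.exp_log (hφpos t)).symm
    _ ≤ Real.exp (p * t + t ^ 2 / 8) := Real.exp_le_exp.mpr hlog

lemma sum_prod_pow {α : Type*} [Fintype α] (N : ℕ) (f : α → ℝ) :
    ∑ z : Fin N → α, ∏ k, f (z k) = (∑ a, f a) ^ N := by
  rw [← Fintype.prod_sum]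
  simp [Finset.prod_const]

lemma sum_sum_eq_sum_pair {α β γ : Type*} [Fintype α] [Fintype β] [AddCommMonoid γ] (N : ℕ)
    (F : (Fin N → α) → (Fin N → β) → γ) :
    ∑ x : Fin N → α, ∑ y : Fin N → β, F x y
      = ∑ ζ : Fin N → α × β, F (fun k => (ζ k).1) (fun k => (ζ k).2) := by
  have h1 : ∑ p : (Fin N → α) × (Fin N → β), F p.1 p.2
      = ∑ x : Fin N → α, ∑ y : Fin N → β, F x y := Fintype.sum_prod_type _
  rw [← h1]
  exact (Fintype.sum_equiv (Equiv.arrowProdEquivProdArrow (Fin N) (fun _ => α) (fun _ => β)) _ _ (fun ζ => rfl)).symm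

section Chernoff

variable {α : Type*} [Fintype α] [DecidableEq α] (w : α → ℝ) (S : Finset α) (N : ℕ)

/-- Count of coordinates landing in `S`. -/
noncomputable def Xcnt (z : Fin N → α) : ℝ :=
  ((Finset.univ.filter fun k => z k ∈ S).card : ℝ)

lemma Xcnt_eq_sum (z : Fin N → α) :
    Xcnt S N z = ∑ k, (if z k ∈ S then (1:ℝ) else 0) := by
  rw [Xcnt, Finset.card_filter]
  push_cast
  rfl

lemma chernoff_core (hw0 : ∀ a, 0 ≤ w a)
    (P : (Fin N → α) → Prop) [DecidablePred P] (t s : ℝ)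
    (hP : ∀ z, P z → t * s ≤ t * Xcnt S N z) :
    ∑ z : Fin N → α, (∏ k, w (z k)) * (if P z then 1 else 0)
      ≤ Real.exp (-(t * s)) *
        (∑ a, w a * Real.exp (t * (if a ∈ S then (1:ℝ) else 0))) ^ N := by
  have key : ∀ z : Fin N → α,
      (∏ k, w (z k)) * (if P z then (1:ℝ) else 0)
        ≤ Real.exp (-(t * s)) * ∏ k, (w (z k) * Real.exp (t * (if z k ∈ S then (1:ℝ) else 0))) := by
    intro z
    have hprod : ∏ k, (w (z k) * Real.exp (t * (if z k ∈ S then (1:ℝ) else 0)))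
        = (∏ k, w (z k)) * Real.exp (t * Xcnt S N z) := by
      rw [Finset.prod_mul_distrib, ← Real.exp_sum]
      congr 1
      rw [Xcnt_eq_sum, Finset.mul_sum]
    rw [hprod]
    by_cases hz : P z
    · rw [if_pos hz, mul_one]
      have h1 : (1:ℝ) ≤ Real.exp (-(t*s)) * Real.exp (t * Xcnt S N z) := by
        rw [← Real.exp_add]
        have h2 := hP z hz
        have h3 : 0 ≤ -(t*s) + t * Xcnt S N z := by linarith
        simpa using Real.one_le_exp h3
      have hw : 0 ≤ ∏ k, w (z k) := Finset.prod_nonneg fun k _ => hw0 _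
      have h2 := mul_le_mul_of_nonneg_left h1 hw
      calc (∏ k, w (z k)) = (∏ k, w (z k)) * 1 := (mul_one _).symm
        _ ≤ (∏ k, w (z k)) * (Real.exp (-(t*s)) * Real.exp (t * Xcnt S N z)) := h2
        _ = Real.exp (-(t*s)) * ((∏ k, w (z k)) * Real.exp (t * Xcnt S N z)) := by ring
    · rw [if_neg hz, mul_zero]
      exact mul_nonneg (Real.exp_nonneg _)
        (mul_nonneg (Finset.prod_nonneg fun k _ => hw0 _) (Real.exp_nonneg _))
  calc ∑ z : Fin N → α, (∏ k, w (z k)) * (if P z then (1:ℝ) else 0)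
      ≤ ∑ z : Fin N → α, Real.exp (-(t * s)) *
          ∏ k, (w (z k) * Real.exp (t * (if z k ∈ S then (1:ℝ) else 0))) :=
        Finset.sum_le_sum fun z _ => key z
    _ = Real.exp (-(t * s)) *
        (∑ a, w a * Real.exp (t * (if a ∈ S then (1:ℝ) else 0))) ^ N := by
        rw [← Finset.mul_sum]
        congr 1
        exact sum_prod_pow N fun a => w a * Real.exp (t * (if a ∈ S then (1:ℝ) else 0))

lemma mgf_value (hw1 : ∑ a, w a = 1) (t : ℝ) :
    ∑ a, w a * Real.exp (t * (if a ∈ S then (1:ℝ) else 0))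
      = 1 - (∑ a ∈ S, w a) + (∑ a ∈ S, w a) * Real.exp t := by
  classical
  have hsplit := Finset.sum_filter_add_sum_filter_not Finset.univ (· ∈ S)
    (fun a => w a * Real.exp (t * (if a ∈ S then (1:ℝ) else 0)))
  have h1 : ∑ a ∈ Finset.univ.filter (· ∈ S),
      w a * Real.exp (t * (if a ∈ S then (1:ℝ) else 0)) = (∑ a ∈ S, w a) * Real.exp t := by
    rw [Finset.sum_mul]
    rw [Finset.filter_mem_eq_inter, Finset.univ_inter]
    apply Finset.sum_congr rfl
    intro a ha
    simp [ha]
  have h2 : ∑ a ∈ Finset.univ.filter (¬ · ∈ S),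
      w a * Real.exp (t * (if a ∈ S then (1:ℝ) else 0)) = ∑ a ∈ Finset.univ.filter (¬ · ∈ S), w a := by
    apply Finset.sum_congr rfl
    intro a ha
    simp only [Finset.mem_filter] at ha
    simp [ha.2]
  have h3 : ∑ a ∈ Finset.univ.filter (¬ · ∈ S), w a = 1 - ∑ a ∈ S, w a := by
    have := Finset.sum_filter_add_sum_filter_not Finset.univ (· ∈ S) w
    rw [Finset.filter_mem_eq_inter, Finset.univ_inter] at this
    linarith
  rw [← hsplit, h1, h2, h3]
  ring

/-- Upper tail Hoeffding bound. -/
lemma tail_ub (hw0 : ∀ a, 0 ≤ w a) (hw1 : ∑ a, w a = 1)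
    (P : (Fin N → α) → Prop) [DecidablePred P] (δ : ℝ) (hδ : 0 ≤ δ)
    (hP : ∀ z, P z → ((∑ a ∈ S, w a) + δ) * N ≤ Xcnt S N z) :
    ∑ z : Fin N → α, (∏ k, w (z k)) * (if P z then 1 else 0)
      ≤ Real.exp (-2 * δ ^ 2 * N) := by
  classical
  set p := ∑ a ∈ S, w a with hp
  have hp0 : 0 ≤ p := Finset.sum_nonneg fun a _ => hw0 a
  have hp1 : p ≤ 1 := by
    rw [← hw1]
    exact Finset.sum_le_sum_of_subset_of_nonneg (Finset.subset_univ S) (fun a _ _ => hw0 a)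
  set t := 4 * δ with ht
  have ht0 : 0 ≤ t := by positivity
  have hcore := chernoff_core w S N hw0 P t ((p + δ) * N)
    (fun z hz => mul_le_mul_of_nonneg_left (hP z hz) ht0)
  rw [mgf_value w S hw1 t] at hcore
  refine hcore.trans ?_
  have hbase : 0 ≤ 1 - p + p * Real.exp t := by
    have : 0 ≤ p * Real.exp t := by positivity
    linarith
  have h1 : (1 - p + p * Real.exp t) ^ N ≤ Real.exp (p * t + t ^ 2 / 8) ^ N :=
    pow_le_pow_left₀ hbase (bernoulli_mgf_le p hp0 hp1 t) N
  calc Real.exp (-(t * ((p + δ) * N))) * (1 - p + p * Real.exp t) ^ N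
      ≤ Real.exp (-(t * ((p + δ) * N))) * Real.exp (p * t + t ^ 2 / 8) ^ N := by
        apply mul_le_mul_of_nonneg_left h1 (Real.exp_nonneg _)
    _ = Real.exp (-(t * ((p + δ) * N)) + N * (p * t + t ^ 2 / 8)) := by
        rw [← Real.exp_nat_mul, ← Real.exp_add]
    _ = Real.exp (-2 * δ ^ 2 * N) := by
        congr 1
        rw [ht]; ring

/-- Lower tail Hoeffding bound. -/
lemma tail_lb (hw0 : ∀ a, 0 ≤ w a) (hw1 : ∑ a, w a = 1)
    (P : (Fin N → α) → Prop) [DecidablePred P] (δ : ℝ) (hδ : 0 ≤ δ)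
    (hP : ∀ z, P z → Xcnt S N z ≤ ((∑ a ∈ S, w a) - δ) * N) :
    ∑ z : Fin N → α, (∏ k, w (z k)) * (if P z then 1 else 0)
      ≤ Real.exp (-2 * δ ^ 2 * N) := by
  classical
  set p := ∑ a ∈ S, w a with hp
  have hp0 : 0 ≤ p := Finset.sum_nonneg fun a _ => hw0 a
  have hp1 : p ≤ 1 := by
    rw [← hw1]
    exact Finset.sum_le_sum_of_subset_of_nonneg (Finset.subset_univ S) (fun a _ _ => hw0 a)
  set t := -(4 * δ) with ht
  have ht0 : t ≤ 0 := by simp [ht]; positivity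
  have hcore := chernoff_core w S N hw0 P t ((p - δ) * N)
    (fun z hz => mul_le_mul_of_nonpos_left (hP z hz) ht0)
  rw [mgf_value w S hw1 t] at hcore
  refine hcore.trans ?_
  have hbase : 0 ≤ 1 - p + p * Real.exp t := by
    have : 0 ≤ p * Real.exp t := by positivity
    linarith
  have h1 : (1 - p + p * Real.exp t) ^ N ≤ Real.exp (p * t + t ^ 2 / 8) ^ N :=
    pow_le_pow_left₀ hbase (bernoulli_mgf_le p hp0 hp1 t) N
  calc Real.exp (-(t * ((p - δ) * N))) * (1 - p + p * Real.exp t) ^ N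
      ≤ Real.exp (-(t * ((p - δ) * N))) * Real.exp (p * t + t ^ 2 / 8) ^ N := by
        apply mul_le_mul_of_nonneg_left h1 (Real.exp_nonneg _)
    _ = Real.exp (-(t * ((p - δ) * N)) + N * (p * t + t ^ 2 / 8)) := by
        rw [← Real.exp_nat_mul, ← Real.exp_add]
    _ = Real.exp (-2 * δ ^ 2 * N) := by
        congr 1
        rw [ht]; ring

end Chernoff
section Fibers
variable {q n d : ℕ} [Fact q.Prime]

lemma tinner_sub_right (M T T' : Tensor q n d) :
    tinner M (T - T') = tinner M T - tinner M T' := by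
  simp [tinner, ← Finset.sum_sub_distrib, mul_sub]

lemma tinner_sub_left (M M' T : Tensor q n d) :
    tinner (M - M') T = tinner M T - tinner M' T := by
  simp [tinner, ← Finset.sum_sub_distrib, sub_mul]

lemma tinner_add_left (M M' T : Tensor q n d) :
    tinner (M + M') T = tinner M T + tinner M' T := by
  simp [tinner, ← Finset.sum_add_distrib, add_mul]

lemma exists_preimage (D : Tensor q n d) (hD : D ≠ 0) (c : ZMod q) :
    ∃ M : Tensor q n d, tinner M D = c := by
  have hex : ∃ idx₀, D idx₀ ≠ 0 := by
    by_contra h; push_neg at h; exact hD (funext h)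
  obtain ⟨idx₀, h0⟩ := hex
  refine ⟨fun idx => if idx = idx₀ then c * (D idx₀)⁻¹ else 0, ?_⟩
  rw [tinner, Finset.sum_eq_single idx₀]
  · rw [if_pos rfl, mul_assoc, inv_mul_cancel₀ h0, mul_one]
  · intro b _ hb; rw [if_neg hb, zero_mul]
  · intro h; exact absurd (Finset.mem_univ idx₀) h

lemma fiber_card_eq (D : Tensor q n d) (hD : D ≠ 0) (c : ZMod q) :
    (Finset.univ.filter fun M : Tensor q n d => tinner M D = c).card
      = (Finset.univ.filter fun M : Tensor q n d => tinner M D = 0).card := by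
  obtain ⟨M₀, hM₀⟩ := exists_preimage D hD c
  apply Finset.card_bij (fun M _ => M - M₀)
  · intro M hM
    simp only [Finset.mem_filter, Finset.mem_univ, true_and] at hM ⊢
    rw [tinner_sub_left, hM, hM₀, sub_self]
  · intro a _ b _ hab
    have := congrArg (fun x => x + M₀) hab
    simpa using this
  · intro M' hM'
    simp only [Finset.mem_filter, Finset.mem_univ, true_and] at hM' ⊢
    exact ⟨M' + M₀, by rw [tinner_add_left, hM', hM₀, zero_add], by simp⟩

lemma fiber_card_mul (D : Tensor q n d) (hD : D ≠ 0) (c : ZMod q) :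
    (Finset.univ.filter fun M : Tensor q n d => tinner M D = c).card * q
      = Fintype.card (Tensor q n d) := by
  haveI : NeZero q := ⟨(Fact.out (p := q.Prime)).ne_zero⟩
  have h := Finset.card_eq_sum_card_fiberwise
    (f := fun M : Tensor q n d => tinner M D) (s := Finset.univ) (t := Finset.univ)
    (fun x _ => Finset.mem_univ _)
  have h2 : ∀ b : ZMod q, (Finset.univ.filter fun M : Tensor q n d => tinner M D = b).card
      = (Finset.univ.filter fun M : Tensor q n d => tinner M D = 0).card :=
    fiber_card_eq D hD
  rw [Finset.sum_congr rfl (fun b _ => h2 b), Finset.sum_const] at h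
  simp only [Finset.card_univ, ZMod.card, smul_eq_mul] at h
  rw [fiber_card_eq D hD c, h]
  exact mul_comm _ _

end Fibers

section Noise
open Finset
variable (q : ℕ) [Fact q.Prime] (ε : ℝ)

lemma noiseW_nonneg (hε0 : 0 ≤ ε) (hε1 : ε ≤ 1) (z : ZMod q) : 0 ≤ noiseW q ε z := by
  have hq2 : 2 ≤ q := (Fact.out (p := q.Prime)).two_le
  have hq1R : (1:ℝ) ≤ (q:ℝ) - 1 := by
    have : (2:ℝ) ≤ q := by exact_mod_cast hq2
    linarith
  rw [noiseW]
  split_ifs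
  · linarith
  · apply div_nonneg hε0; linarith

lemma filter_ne_zero_eq : Finset.univ.filter (fun z : ZMod q => ¬ z = 0) = ({0}ᶜ : Finset (ZMod q)) := by
  ext z; simp

lemma zmod_card_compl : (({0}ᶜ : Finset (ZMod q)).card) = q - 1 := by
  haveI : NeZero q := ⟨(Fact.out (p := q.Prime)).ne_zero⟩
  rw [Finset.card_compl, Finset.card_singleton, Fintype.card_eq_nat_card, Nat.card_zmod]

lemma noiseW_sum : ∑ z : ZMod q, noiseW q ε z = 1 := by
  haveI : NeZero q := ⟨(Fact.out (p := q.Prime)).ne_zero⟩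
  have hq2 : 2 ≤ q := (Fact.out (p := q.Prime)).two_le
  have hq1R : (1:ℝ) < q := by exact_mod_cast hq2.trans_lt' one_lt_two
  rw [← Finset.sum_filter_add_sum_filter_not Finset.univ (· = (0:ZMod q))]
  have h1 : Finset.univ.filter (· = (0:ZMod q)) = {0} := by ext z; simp
  rw [h1, filter_ne_zero_eq, Finset.sum_singleton]
  have h3 : ∀ z ∈ ({(0:ZMod q)}ᶜ : Finset (ZMod q)), noiseW q ε z = ε / ((q:ℝ) - 1) := by
    intro z hz
    rw [noiseW, if_neg (by simpa using hz)]
  rw [Finset.sum_congr rfl h3, Finset.sum_const, zmod_card_compl, noiseW, if_pos rfl,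
    nsmul_eq_mul]
  have hc : ((q - 1 : ℕ) : ℝ) = (q:ℝ) - 1 := by
    have : 1 ≤ q := by omega
    push_cast [this]
    ring
  rw [hc]
  have hne : (q:ℝ) - 1 ≠ 0 := by linarith
  field_simp
  ring

lemma noiseW_sum_ne :
    ∑ z ∈ Finset.univ.filter (fun z : ZMod q => z ≠ 0), noiseW q ε z = ε := by
  haveI : NeZero q := ⟨(Fact.out (p := q.Prime)).ne_zero⟩
  have hq2 : 2 ≤ q := (Fact.out (p := q.Prime)).two_le
  have hq1R : (1:ℝ) < q := by exact_mod_cast hq2.trans_lt' one_lt_two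
  have hfe : Finset.univ.filter (fun z : ZMod q => z ≠ 0) = ({0}ᶜ : Finset (ZMod q)) := by
    ext z; simp
  rw [hfe]
  have h3 : ∀ z ∈ ({(0:ZMod q)}ᶜ : Finset (ZMod q)), noiseW q ε z = ε / ((q:ℝ) - 1) := by
    intro z hz
    rw [noiseW, if_neg (by simpa using hz)]
  rw [Finset.sum_congr rfl h3, Finset.sum_const, zmod_card_compl, nsmul_eq_mul]
  have hc : ((q - 1 : ℕ) : ℝ) = (q:ℝ) - 1 := by
    have : 1 ≤ q := by omega
    push_cast [this]
    ring
  rw [hc]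
  have hne : (q:ℝ) - 1 ≠ 0 := by linarith
  field_simp

end Noise

section PValue
open Finset
variable {q n d : ℕ} [Fact q.Prime]

lemma wprime_sum (ε : ℝ) :
    ∑ ab : Tensor q n d × ZMod q, noiseW q ε ab.2 / (Fintype.card (Tensor q n d) : ℝ) = 1 := by
  have hQpos : 0 < Fintype.card (Tensor q n d) := Fintype.card_pos
  have hQR : (0:ℝ) < (Fintype.card (Tensor q n d) : ℝ) := by exact_mod_cast hQpos
  calc ∑ ab : Tensor q n d × ZMod q, noiseW q ε ab.2 / (Fintype.card (Tensor q n d) : ℝ)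
      = ∑ _x : Tensor q n d, ∑ y : ZMod q, noiseW q ε y / (Fintype.card (Tensor q n d) : ℝ) :=
        Fintype.sum_prod_type _
    _ = 1 := by
        rw [Finset.sum_const, Finset.card_univ, nsmul_eq_mul, ← Finset.sum_div, noiseW_sum]
        field_simp

lemma pvalue (ε : ℝ) (D : Tensor q n d) (hD : D ≠ 0) :
    ∑ ab ∈ Finset.univ.filter (fun ab : Tensor q n d × ZMod q => tinner ab.1 D ≠ ab.2),
        noiseW q ε ab.2 / (Fintype.card (Tensor q n d) : ℝ)
      = ((q:ℝ) - 1) / q := by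
  have hq := Fact.out (p := q.Prime)
  haveI : NeZero q := ⟨hq.ne_zero⟩
  have hQpos : 0 < Fintype.card (Tensor q n d) := Fintype.card_pos
  have hQR : (0:ℝ) < (Fintype.card (Tensor q n d) : ℝ) := by exact_mod_cast hQpos
  have hqR : (0:ℝ) < q := by exact_mod_cast hq.pos
  have hstep : ∑ ab ∈ Finset.univ.filter (fun ab : Tensor q n d × ZMod q => tinner ab.1 D ≠ ab.2),
        noiseW q ε ab.2 / (Fintype.card (Tensor q n d) : ℝ)
      = ∑ z : ZMod q, ∑ M : Tensor q n d,
          (if tinner M D ≠ z then noiseW q ε z / (Fintype.card (Tensor q n d) : ℝ) else 0) := by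
    rw [Finset.sum_filter]
    rw [Fintype.sum_prod_type]
    exact Finset.sum_comm
  rw [hstep]
  have hinner : ∀ z : ZMod q,
      (∑ M : Tensor q n d, if tinner M D ≠ z
          then noiseW q ε z / (Fintype.card (Tensor q n d) : ℝ) else 0)
        = noiseW q ε z * (((q:ℝ) - 1) / q) := by
    intro z
    rw [Finset.sum_ite, Finset.sum_const, Finset.sum_const, smul_zero, add_zero, nsmul_eq_mul]
    have hKq := fiber_card_mul D hD z
    set K := (Finset.univ.filter fun M : Tensor q n d => tinner M D = z).card with hK
    have hsplit : K + (Finset.univ.filter fun M : Tensor q n d => ¬ tinner M D = z).card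
        = Fintype.card (Tensor q n d) := by
      rw [Finset.card_filter_add_card_filter_not, Finset.card_univ]
    have hfe : (Finset.univ.filter fun M : Tensor q n d => tinner M D ≠ z)
        = (Finset.univ.filter fun M : Tensor q n d => ¬ tinner M D = z) := rfl
    rw [hfe]
    have hcard : ((Finset.univ.filter fun M : Tensor q n d => ¬ tinner M D = z).card : ℝ)
        = (Fintype.card (Tensor q n d) : ℝ) - K := by
      have := hsplit
      push_cast [← this]
      ring
    rw [hcard]
    have hKqR : (K : ℝ) * q = (Fintype.card (Tensor q n d) : ℝ) := by exact_mod_cast hKq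
    have hgoal : ((Fintype.card (Tensor q n d) : ℝ) - K) / (Fintype.card (Tensor q n d) : ℝ)
        = ((q:ℝ) - 1) / q := by
      rw [div_eq_div_iff (ne_of_gt hQR) (ne_of_gt hqR)]
      nlinarith [hKqR]
    calc ((Fintype.card (Tensor q n d) : ℝ) - K) *
          (noiseW q ε z / (Fintype.card (Tensor q n d) : ℝ))
        = noiseW q ε z * (((Fintype.card (Tensor q n d) : ℝ) - K) /
            (Fintype.card (Tensor q n d) : ℝ)) := by ring
      _ = noiseW q ε z * (((q:ℝ) - 1) / q) := by rw [hgoal]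
  rw [Finset.sum_congr rfl (fun z _ => hinner z), ← Finset.sum_mul, noiseW_sum, one_mul]

lemma rank_card_le (r : ℕ) (p : Tensor q n d → Prop) [DecidablePred p]
    (hp : ∀ T, p T → rankLE q n d r T) :
    (Finset.univ.filter p).card ≤ q ^ (n * r * d) := by
  classical
  haveI : NeZero q := ⟨(Fact.out (p := q.Prime)).ne_zero⟩
  set F : (Fin r → Fin d → (Fin n → ZMod q)) → Tensor q n d :=
    fun u idx => ∑ i, ∏ j, u i j (idx j) with hF
  have hsub : Finset.univ.filter p ⊆ Finset.univ.image F := by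
    intro T hT
    rw [Finset.mem_filter] at hT
    obtain ⟨u, hu⟩ := hp T hT.2
    exact Finset.mem_image.mpr ⟨u, Finset.mem_univ _, (funext fun idx => (hu idx).symm)⟩
  calc (Finset.univ.filter p).card ≤ (Finset.univ.image F).card := Finset.card_le_card hsub
    _ ≤ (Finset.univ : Finset (Fin r → Fin d → Fin n → ZMod q)).card := Finset.card_image_le
    _ = q ^ (n * r * d) := by
        rw [Finset.card_univ]
        have hz : Fintype.card (ZMod q) = q := by
          haveI : NeZero q := ⟨(Fact.out (p := q.Prime)).ne_zero⟩
          exact ZMod.card q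
        have h1 : Fintype.card (Fin r → Fin d → Fin n → ZMod q) = ((q ^ n) ^ d) ^ r := by
          rw [Fintype.card_fun, Fintype.card_fun, Fintype.card_fun, hz,
            Fintype.card_fin, Fintype.card_fin, Fintype.card_fin]
        rw [h1, ← pow_mul, ← pow_mul]
        congr 1
        ring

end PValue
set_option maxHeartbeats 1000000 in
/-- **Theorem 4 (Achievability II, noisy).** Fix a prime `q`, `d ≥ 2`, `r ≥ 1`, reals
`0 ≤ ε < η < (q−1)/q` and a constant `C₂ > 1`; set `γ = ln q / (2((q−1)/q − η)²)`.  For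
each `n`, let `T*_n` have rank at most `r`, let `m n ≥ C₂·γ·n·r·d`, draw `m n` i.i.d.
uniform sensing tensors and `q`-ary symmetric noise (`ỹ = y_{T*_n} + z`), and set
`τ_n = ⌊η·m n⌋`.  The probability of the error event `E_n` — that `d_H(y_{T*_n}, ỹ) > τ_n`
or some `T ≠ T*_n` of rank at most `r` has `d_H(y_T, ỹ) ≤ τ_n` — tends to `0` as
`n → ∞`. -/
theorem prob_error_noisy_tendsto_zero (q d r : ℕ) [Fact q.Prime] (hd : 2 ≤ d) (hr : 1 ≤ r)
    (ε η : ℝ) (hε0 : 0 ≤ ε) (hεη : ε < η) (hη : η < ((q : ℝ) - 1) / q)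
    (C₂ : ℝ) (hC₂ : 1 < C₂)
    (Tstar : ∀ n : ℕ, Tensor q n d) (hTstar : ∀ n, rankLE q n d r (Tstar n))
    (m : ℕ → ℕ)
    (hm : ∀ n : ℕ, 1 ≤ n →
      (C₂ * (Real.log q / (2 * (((q : ℝ) - 1) / q - η) ^ 2)) * n * r * d : ℝ) ≤ m n) :
    Filter.Tendsto
      (fun n : ℕ =>
        (∑ M : Fin (m n) → Tensor q n d, ∑ z : Fin (m n) → ZMod q,
            (∏ k, noiseW q ε (z k)) *
              (if (⌊η * m n⌋₊ < hammingDist (fun k => tinner (M k) (Tstar n))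
                      (fun k => tinner (M k) (Tstar n) + z k) ∨
                    ∃ T : Tensor q n d, T ≠ Tstar n ∧ rankLE q n d r T ∧
                      hammingDist (fun k => tinner (M k) T)
                        (fun k => tinner (M k) (Tstar n) + z k) ≤ ⌊η * m n⌋₊)
                then 1 else 0)) /
          (Fintype.card (Tensor q n d) : ℝ) ^ (m n))
      Filter.atTop (nhds 0) := by
  have hq : q.Prime := Fact.out
  haveI : NeZero q := ⟨hq.ne_zero⟩
  have hq2 : 2 ≤ q := hq.two_le
  have hq1R : (1:ℝ) < q := by exact_mod_cast hq2.trans_lt' one_lt_two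
  have hqR : (0:ℝ) < q := lt_trans one_pos hq1R
  have hpg1 : ((q:ℝ) - 1) / q < 1 := by rw [div_lt_one hqR]; linarith
  set δ : ℝ := ((q:ℝ) - 1) / q - η with hδdef
  have hδpos : 0 < δ := by rw [hδdef]; linarith
  have hη1 : η < 1 := hη.trans_le hpg1.le
  have hε1 : ε ≤ 1 := le_of_lt (hεη.trans hη1)
  have hη0 : 0 < η := lt_of_le_of_lt hε0 hεη
  have hlogq : 0 < Real.log q := Real.log_pos hq1R
  set γ : ℝ := Real.log q / (2 * δ ^ 2) with hγdef
  have hγpos : 0 < γ := div_pos hlogq (by positivity)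
  have hrR : (1:ℝ) ≤ r := by exact_mod_cast hr
  have hdR : (1:ℝ) ≤ d := by exact_mod_cast (le_trans one_le_two hd)
  have hηε : 0 < η - ε := by linarith
  set a₁ : ℝ := 2 * (η - ε) ^ 2 * (C₂ * γ * r * d) with ha₁
  set a₂ : ℝ := (C₂ - 1) * Real.log q with ha₂
  have ha₁pos : 0 < a₁ := by
    rw [ha₁]
    have h1 : (0:ℝ) < C₂ * γ * r * d := by positivity
    positivity
  have ha₂pos : 0 < a₂ := mul_pos (by linarith) hlogq
  -- nonnegativity of the probability expression
  have nonneg : ∀ n : ℕ,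
      0 ≤ (∑ M : Fin (m n) → Tensor q n d, ∑ z : Fin (m n) → ZMod q,
            (∏ k, noiseW q ε (z k)) *
              (if (⌊η * m n⌋₊ < hammingDist (fun k => tinner (M k) (Tstar n))
                      (fun k => tinner (M k) (Tstar n) + z k) ∨
                    ∃ T : Tensor q n d, T ≠ Tstar n ∧ rankLE q n d r T ∧
                      hammingDist (fun k => tinner (M k) T)
                        (fun k => tinner (M k) (Tstar n) + z k) ≤ ⌊η * m n⌋₊)
                then 1 else 0)) /
          (Fintype.card (Tensor q n d) : ℝ) ^ (m n) := by
    intro n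
    apply div_nonneg _ (by positivity)
    apply Finset.sum_nonneg; intro M _
    apply Finset.sum_nonneg; intro z _
    apply mul_nonneg
    · exact Finset.prod_nonneg fun k _ => noiseW_nonneg q ε hε0 hε1 _
    · split_ifs <;> norm_num
  -- main quantitative bound
  have key : ∀ n : ℕ, 1 ≤ n →
      (∑ M : Fin (m n) → Tensor q n d, ∑ z : Fin (m n) → ZMod q,
            (∏ k, noiseW q ε (z k)) *
              (if (⌊η * m n⌋₊ < hammingDist (fun k => tinner (M k) (Tstar n))
                      (fun k => tinner (M k) (Tstar n) + z k) ∨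
                    ∃ T : Tensor q n d, T ≠ Tstar n ∧ rankLE q n d r T ∧
                      hammingDist (fun k => tinner (M k) T)
                        (fun k => tinner (M k) (Tstar n) + z k) ≤ ⌊η * m n⌋₊)
                then 1 else 0)) /
          (Fintype.card (Tensor q n d) : ℝ) ^ (m n)
        ≤ Real.exp (-(a₁ * n)) + Real.exp (-(a₂ * n)) := by
    intro n hn
    have hmn := hm n hn
    set N := m n with hNdef
    have hNnn : (0:ℝ) ≤ (N:ℝ) := Nat.cast_nonneg N
    set τ := ⌊η * (N:ℝ)⌋₊ with hτdef
    have hQpos : (0:ℝ) < (Fintype.card (Tensor q n d) : ℝ) := by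
      exact_mod_cast (Fintype.card_pos : 0 < Fintype.card (Tensor q n d))
    have hQN : (0:ℝ) < (Fintype.card (Tensor q n d) : ℝ) ^ N := pow_pos hQpos N
    rw [div_le_iff₀ hQN]
    have hWnn : ∀ z : Fin N → ZMod q, 0 ≤ ∏ k, noiseW q ε (z k) :=
      fun z => Finset.prod_nonneg fun k _ => noiseW_nonneg q ε hε0 hε1 _
    -- split the error event
    have hsplit : ∀ (M : Fin N → Tensor q n d) (z : Fin N → ZMod q),
        (∏ k, noiseW q ε (z k)) *
            (if (τ < hammingDist (fun k => tinner (M k) (Tstar n))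
                    (fun k => tinner (M k) (Tstar n) + z k) ∨
                  ∃ T : Tensor q n d, T ≠ Tstar n ∧ rankLE q n d r T ∧
                    hammingDist (fun k => tinner (M k) T)
                      (fun k => tinner (M k) (Tstar n) + z k) ≤ τ)
              then 1 else 0)
          ≤ (∏ k, noiseW q ε (z k)) *
              (if τ < hammingDist (fun k => tinner (M k) (Tstar n))
                  (fun k => tinner (M k) (Tstar n) + z k) then 1 else 0)
            + (∏ k, noiseW q ε (z k)) *
              (if ∃ T : Tensor q n d, T ≠ Tstar n ∧ rankLE q n d r T ∧
                    hammingDist (fun k => tinner (M k) T)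
                      (fun k => tinner (M k) (Tstar n) + z k) ≤ τ then 1 else 0) := by
      intro M z
      have h0 : (0:ℝ) ≤ ∏ k, noiseW q ε (z k) := hWnn z
      by_cases h1 : τ < hammingDist (fun k => tinner (M k) (Tstar n))
          (fun k => tinner (M k) (Tstar n) + z k)
      · rw [if_pos (Or.inl h1), if_pos h1]
        have : (0:ℝ) ≤ (∏ k, noiseW q ε (z k)) *
            (if ∃ T : Tensor q n d, T ≠ Tstar n ∧ rankLE q n d r T ∧
                  hammingDist (fun k => tinner (M k) T)
                    (fun k => tinner (M k) (Tstar n) + z k) ≤ τ then (1:ℝ) else 0) :=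
          mul_nonneg h0 (by split_ifs <;> norm_num)
        linarith
      · by_cases h2 : ∃ T : Tensor q n d, T ≠ Tstar n ∧ rankLE q n d r T ∧
            hammingDist (fun k => tinner (M k) T)
              (fun k => tinner (M k) (Tstar n) + z k) ≤ τ
        · rw [if_pos (Or.inr h2), if_pos h2, if_neg h1]
          linarith
        · rw [if_neg (not_or.mpr ⟨h1, h2⟩), if_neg h1, if_neg h2]
          simp
    -- Part 1 : the noise weight bound
    have hdist : ∀ (M : Fin N → Tensor q n d) (z : Fin N → ZMod q),
        hammingDist (fun k => tinner (M k) (Tstar n))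
            (fun k => tinner (M k) (Tstar n) + z k)
          = (Finset.univ.filter fun k => z k ≠ 0).card := by
      intro M z
      simp only [hammingDist]
      congr 1
      ext k
      simp [left_eq_add]
    have hT1 : ∑ z : Fin N → ZMod q, (∏ k, noiseW q ε (z k)) *
          (if τ < (Finset.univ.filter fun k => z k ≠ 0).card then (1:ℝ) else 0)
        ≤ Real.exp (-2 * (η - ε) ^ 2 * N) := by
      apply tail_ub (noiseW q ε) (Finset.univ.filter (fun z : ZMod q => z ≠ 0)) N
        (noiseW_nonneg q ε hε0 hε1) (noiseW_sum q ε) _ (η - ε) hηε.le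
      intro z hz
      rw [noiseW_sum_ne q ε]
      have hX : Xcnt (Finset.univ.filter (fun z : ZMod q => z ≠ 0)) N z
          = ((Finset.univ.filter fun k => z k ≠ 0).card : ℝ) := by
        rw [Xcnt]
        congr 2
        ext k
        simp
      rw [hX]
      have h1 : η * (N:ℝ) < (τ:ℝ) + 1 := by
        rw [hτdef]
        exact_mod_cast Nat.lt_floor_add_one (η * (N:ℝ))
      have h2 : (τ:ℝ) + 1 ≤ ((Finset.univ.filter fun k => z k ≠ 0).card : ℝ) := by
        exact_mod_cast Nat.succ_le_of_lt hz
      calc (ε + (η - ε)) * N = η * N := by ring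
        _ ≤ ((Finset.univ.filter fun k => z k ≠ 0).card : ℝ) := by linarith
    have hS1 : ∑ M : Fin N → Tensor q n d, ∑ z : Fin N → ZMod q,
          (∏ k, noiseW q ε (z k)) *
            (if τ < hammingDist (fun k => tinner (M k) (Tstar n))
                (fun k => tinner (M k) (Tstar n) + z k) then (1:ℝ) else 0)
        ≤ (Fintype.card (Tensor q n d) : ℝ) ^ N * Real.exp (-2 * (η - ε) ^ 2 * N) := by
      have heach : ∀ M : Fin N → Tensor q n d, ∑ z : Fin N → ZMod q,
            (∏ k, noiseW q ε (z k)) *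
              (if τ < hammingDist (fun k => tinner (M k) (Tstar n))
                  (fun k => tinner (M k) (Tstar n) + z k) then (1:ℝ) else 0)
          = ∑ z : Fin N → ZMod q, (∏ k, noiseW q ε (z k)) *
              (if τ < (Finset.univ.filter fun k => z k ≠ 0).card then (1:ℝ) else 0) := by
        intro M
        apply Finset.sum_congr rfl
        intro z _
        congr 1
        exact if_congr (by rw [hdist M z]) rfl rfl
      calc ∑ M : Fin N → Tensor q n d, ∑ z : Fin N → ZMod q,
            (∏ k, noiseW q ε (z k)) *
              (if τ < hammingDist (fun k => tinner (M k) (Tstar n))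
                  (fun k => tinner (M k) (Tstar n) + z k) then (1:ℝ) else 0)
          = ∑ _M : Fin N → Tensor q n d, ∑ z : Fin N → ZMod q,
              (∏ k, noiseW q ε (z k)) *
                (if τ < (Finset.univ.filter fun k => z k ≠ 0).card then (1:ℝ) else 0) :=
            Finset.sum_congr rfl (fun M _ => heach M)
        _ = (Fintype.card (Fin N → Tensor q n d) : ℝ) *
              ∑ z : Fin N → ZMod q, (∏ k, noiseW q ε (z k)) *
                (if τ < (Finset.univ.filter fun k => z k ≠ 0).card then (1:ℝ) else 0) := by
            rw [Finset.sum_const, Finset.card_univ, nsmul_eq_mul]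
        _ ≤ (Fintype.card (Fin N → Tensor q n d) : ℝ) * Real.exp (-2 * (η - ε) ^ 2 * N) := by
            apply mul_le_mul_of_nonneg_left hT1 (by positivity)
        _ = (Fintype.card (Tensor q n d) : ℝ) ^ N * Real.exp (-2 * (η - ε) ^ 2 * N) := by
            rw [Fintype.card_fun, Fintype.card_fin]
            push_cast
            ring
    -- Part 2 : union bound over candidate tensors
    have hperT : ∀ T : Tensor q n d, T ≠ Tstar n →
        ∑ M : Fin N → Tensor q n d, ∑ z : Fin N → ZMod q,
            (∏ k, noiseW q ε (z k)) *
              (if hammingDist (fun k => tinner (M k) T)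
                  (fun k => tinner (M k) (Tstar n) + z k) ≤ τ then (1:ℝ) else 0)
          ≤ (Fintype.card (Tensor q n d) : ℝ) ^ N * Real.exp (-2 * δ ^ 2 * N) := by
      intro T hTne
      have hDne : T - Tstar n ≠ 0 := sub_ne_zero_of_ne hTne
      set S : Finset (Tensor q n d × ZMod q) :=
        Finset.univ.filter (fun ab => tinner ab.1 (T - Tstar n) ≠ ab.2) with hSdef
      set w' : Tensor q n d × ZMod q → ℝ :=
        fun ab => noiseW q ε ab.2 / (Fintype.card (Tensor q n d) : ℝ) with hw'def
      have hw'0 : ∀ ab, 0 ≤ w' ab :=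
        fun ab => div_nonneg (noiseW_nonneg q ε hε0 hε1 _) hQpos.le
      have hw'1 : ∑ ab, w' ab = 1 := wprime_sum ε
      have hPS : ∑ ab ∈ S, w' ab = ((q:ℝ) - 1) / q := pvalue ε (T - Tstar n) hDne
      have htail : ∑ ζ : Fin N → Tensor q n d × ZMod q,
            (∏ k, w' (ζ k)) *
              (if hammingDist (fun k => tinner ((ζ k).1) T)
                  (fun k => tinner ((ζ k).1) (Tstar n) + (ζ k).2) ≤ τ then (1:ℝ) else 0)
          ≤ Real.exp (-2 * δ ^ 2 * N) := by
        apply tail_lb w' S N hw'0 hw'1 _ δ hδpos.le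
        intro ζ hζ
        rw [hPS]
        have hXd : Xcnt S N ζ = ((hammingDist (fun k => tinner ((ζ k).1) T)
            (fun k => tinner ((ζ k).1) (Tstar n) + (ζ k).2) : ℕ) : ℝ) := by
          rw [Xcnt]
          congr 2
          simp only [hammingDist]
          congr 1
          ext k
          simp only [Finset.mem_filter, Finset.mem_univ, true_and, hSdef]
          rw [tinner_sub_right]
          exact not_congr sub_eq_iff_eq_add'
        calc Xcnt S N ζ
            = ((hammingDist (fun k => tinner ((ζ k).1) T)
                (fun k => tinner ((ζ k).1) (Tstar n) + (ζ k).2) : ℕ) : ℝ) := hXd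
          _ ≤ (τ:ℝ) := by exact_mod_cast hζ
          _ ≤ η * N := by rw [hτdef]; exact Nat.floor_le (by positivity)
          _ = (((q:ℝ) - 1) / q - δ) * N := by rw [hδdef]; ring
      have htrans : ∑ M : Fin N → Tensor q n d, ∑ z : Fin N → ZMod q,
            (∏ k, noiseW q ε (z k)) *
              (if hammingDist (fun k => tinner (M k) T)
                  (fun k => tinner (M k) (Tstar n) + z k) ≤ τ then (1:ℝ) else 0)
          = (Fintype.card (Tensor q n d) : ℝ) ^ N *
              ∑ ζ : Fin N → Tensor q n d × ZMod q,
                (∏ k, w' (ζ k)) *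
                  (if hammingDist (fun k => tinner ((ζ k).1) T)
                      (fun k => tinner ((ζ k).1) (Tstar n) + (ζ k).2) ≤ τ then (1:ℝ) else 0) := by
        calc ∑ M : Fin N → Tensor q n d, ∑ z : Fin N → ZMod q,
              (∏ k, noiseW q ε (z k)) *
                (if hammingDist (fun k => tinner (M k) T)
                    (fun k => tinner (M k) (Tstar n) + z k) ≤ τ then (1:ℝ) else 0)
            = ∑ ζ : Fin N → Tensor q n d × ZMod q,
                (∏ k, noiseW q ε ((ζ k).2)) *
                  (if hammingDist (fun k => tinner ((ζ k).1) T)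
                      (fun k => tinner ((ζ k).1) (Tstar n) + (ζ k).2) ≤ τ then (1:ℝ) else 0) :=
              sum_sum_eq_sum_pair N _
          _ = ∑ ζ : Fin N → Tensor q n d × ZMod q,
                (Fintype.card (Tensor q n d) : ℝ) ^ N * ((∏ k, w' (ζ k)) *
                  (if hammingDist (fun k => tinner ((ζ k).1) T)
                      (fun k => tinner ((ζ k).1) (Tstar n) + (ζ k).2) ≤ τ then (1:ℝ) else 0)) := by
              apply Finset.sum_congr rfl
              intro ζ _
              have hprod : ∏ k, w' (ζ k)
                  = (∏ k, noiseW q ε ((ζ k).2)) / (Fintype.card (Tensor q n d) : ℝ) ^ N := by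
                rw [hw'def]
                rw [Finset.prod_div_distrib, Finset.prod_const, Finset.card_univ,
                  Fintype.card_fin]
              rw [hprod]
              field_simp
          _ = (Fintype.card (Tensor q n d) : ℝ) ^ N *
                ∑ ζ : Fin N → Tensor q n d × ZMod q,
                  (∏ k, w' (ζ k)) *
                    (if hammingDist (fun k => tinner ((ζ k).1) T)
                        (fun k => tinner ((ζ k).1) (Tstar n) + (ζ k).2) ≤ τ then (1:ℝ) else 0) :=
              (Finset.mul_sum _ _ _).symm
      rw [htrans]
      exact mul_le_mul_of_nonneg_left htail hQN.le
    set R : Finset (Tensor q n d) :=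
      Finset.univ.filter (fun T => T ≠ Tstar n ∧ rankLE q n d r T) with hRdef
    have hpoint : ∀ (M : Fin N → Tensor q n d) (z : Fin N → ZMod q),
        (if ∃ T : Tensor q n d, T ≠ Tstar n ∧ rankLE q n d r T ∧
              hammingDist (fun k => tinner (M k) T)
                (fun k => tinner (M k) (Tstar n) + z k) ≤ τ then (1:ℝ) else 0)
          ≤ ∑ T ∈ R, (if hammingDist (fun k => tinner (M k) T)
              (fun k => tinner (M k) (Tstar n) + z k) ≤ τ then (1:ℝ) else 0) := by
      intro M z
      by_cases h : ∃ T : Tensor q n d, T ≠ Tstar n ∧ rankLE q n d r T ∧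
          hammingDist (fun k => tinner (M k) T)
            (fun k => tinner (M k) (Tstar n) + z k) ≤ τ
      · rw [if_pos h]
        obtain ⟨T, h1, h2, h3⟩ := h
        have hTR : T ∈ R := by
          rw [hRdef, Finset.mem_filter]
          exact ⟨Finset.mem_univ _, h1, h2⟩
        have h5 : (if hammingDist (fun k => tinner (M k) T)
              (fun k => tinner (M k) (Tstar n) + z k) ≤ τ then (1:ℝ) else 0)
            ≤ ∑ T' ∈ R, (if hammingDist (fun k => tinner (M k) T')
              (fun k => tinner (M k) (Tstar n) + z k) ≤ τ then (1:ℝ) else 0) :=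
          Finset.single_le_sum
            (f := fun T' => if hammingDist (fun k => tinner (M k) T')
              (fun k => tinner (M k) (Tstar n) + z k) ≤ τ then (1:ℝ) else 0)
            (fun T' _ => by split_ifs <;> norm_num) hTR
        rw [if_pos h3] at h5
        exact h5
      · rw [if_neg h]
        exact Finset.sum_nonneg fun T _ => by split_ifs <;> norm_num
    have hRcard : (R.card : ℝ) ≤ (q:ℝ) ^ (n * r * d) := by
      have h := rank_card_le r (fun T : Tensor q n d => T ≠ Tstar n ∧ rankLE q n d r T)
        (fun T hT => hT.2)
      calc (R.card : ℝ) ≤ ((q ^ (n * r * d) : ℕ) : ℝ) := by exact_mod_cast h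
        _ = (q:ℝ) ^ (n * r * d) := by push_cast; ring
    have hS2 : ∑ M : Fin N → Tensor q n d, ∑ z : Fin N → ZMod q,
          (∏ k, noiseW q ε (z k)) *
            (if ∃ T : Tensor q n d, T ≠ Tstar n ∧ rankLE q n d r T ∧
                  hammingDist (fun k => tinner (M k) T)
                    (fun k => tinner (M k) (Tstar n) + z k) ≤ τ then (1:ℝ) else 0)
        ≤ (Fintype.card (Tensor q n d) : ℝ) ^ N *
            ((q:ℝ) ^ (n * r * d) * Real.exp (-2 * δ ^ 2 * N)) := by
      calc ∑ M : Fin N → Tensor q n d, ∑ z : Fin N → ZMod q,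
            (∏ k, noiseW q ε (z k)) *
              (if ∃ T : Tensor q n d, T ≠ Tstar n ∧ rankLE q n d r T ∧
                    hammingDist (fun k => tinner (M k) T)
                      (fun k => tinner (M k) (Tstar n) + z k) ≤ τ then (1:ℝ) else 0)
          ≤ ∑ M : Fin N → Tensor q n d, ∑ z : Fin N → ZMod q,
              (∏ k, noiseW q ε (z k)) *
                ∑ T ∈ R, (if hammingDist (fun k => tinner (M k) T)
                    (fun k => tinner (M k) (Tstar n) + z k) ≤ τ then (1:ℝ) else 0) := by
            apply Finset.sum_le_sum; intro M _
            apply Finset.sum_le_sum; intro z _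
            exact mul_le_mul_of_nonneg_left (hpoint M z) (hWnn z)
        _ = ∑ T ∈ R, ∑ M : Fin N → Tensor q n d, ∑ z : Fin N → ZMod q,
              (∏ k, noiseW q ε (z k)) *
                (if hammingDist (fun k => tinner (M k) T)
                    (fun k => tinner (M k) (Tstar n) + z k) ≤ τ then (1:ℝ) else 0) := by
            simp_rw [Finset.mul_sum]
            calc ∑ M : Fin N → Tensor q n d, ∑ z : Fin N → ZMod q, ∑ T ∈ R,
                  (∏ k, noiseW q ε (z k)) *
                    (if hammingDist (fun k => tinner (M k) T)
                        (fun k => tinner (M k) (Tstar n) + z k) ≤ τ then (1:ℝ) else 0)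
                = ∑ M : Fin N → Tensor q n d, ∑ T ∈ R, ∑ z : Fin N → ZMod q,
                    (∏ k, noiseW q ε (z k)) *
                      (if hammingDist (fun k => tinner (M k) T)
                          (fun k => tinner (M k) (Tstar n) + z k) ≤ τ then (1:ℝ) else 0) :=
                  Finset.sum_congr rfl (fun M _ => Finset.sum_comm)
              _ = ∑ T ∈ R, ∑ M : Fin N → Tensor q n d, ∑ z : Fin N → ZMod q,
                    (∏ k, noiseW q ε (z k)) *
                      (if hammingDist (fun k => tinner (M k) T)
                          (fun k => tinner (M k) (Tstar n) + z k) ≤ τ then (1:ℝ) else 0) :=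
                  Finset.sum_comm
        _ ≤ ∑ _T ∈ R, (Fintype.card (Tensor q n d) : ℝ) ^ N * Real.exp (-2 * δ ^ 2 * N) := by
            apply Finset.sum_le_sum
            intro T hT
            rw [hRdef, Finset.mem_filter] at hT
            exact hperT T hT.2.1
        _ = (R.card : ℝ) * ((Fintype.card (Tensor q n d) : ℝ) ^ N *
              Real.exp (-2 * δ ^ 2 * N)) := by
            rw [Finset.sum_const, nsmul_eq_mul]
        _ ≤ (q:ℝ) ^ (n * r * d) * ((Fintype.card (Tensor q n d) : ℝ) ^ N *
              Real.exp (-2 * δ ^ 2 * N)) := by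
            apply mul_le_mul_of_nonneg_right hRcard (by positivity)
        _ = (Fintype.card (Tensor q n d) : ℝ) ^ N *
              ((q:ℝ) ^ (n * r * d) * Real.exp (-2 * δ ^ 2 * N)) := by ring
    -- comparison with the exponential bounds
    have hcomp1 : Real.exp (-2 * (η - ε) ^ 2 * N) ≤ Real.exp (-(a₁ * n)) := by
      apply Real.exp_le_exp.mpr
      have h2 : a₁ * n ≤ 2 * (η - ε) ^ 2 * N := by
        rw [ha₁]
        calc 2 * (η - ε) ^ 2 * (C₂ * γ * r * d) * n
            = 2 * (η - ε) ^ 2 * (C₂ * γ * n * r * d) := by ring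
          _ ≤ 2 * (η - ε) ^ 2 * N := by
              apply mul_le_mul_of_nonneg_left hmn (by positivity)
      linarith
    have hcomp2 : (q:ℝ) ^ (n * r * d) * Real.exp (-2 * δ ^ 2 * N)
        ≤ Real.exp (-(a₂ * n)) := by
      have hqpow : (q:ℝ) ^ (n * r * d) = Real.exp (((n * r * d : ℕ) : ℝ) * Real.log q) := by
        rw [Real.exp_nat_mul, Real.exp_log hqR]
      rw [hqpow, ← Real.exp_add]
      apply Real.exp_le_exp.mpr
      rw [ha₂]
      have hγ2 : γ * (2 * δ ^ 2) = Real.log q := by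
        rw [hγdef]
        field_simp
      have h3 : C₂ * Real.log q * ((n * r * d : ℕ) : ℝ) ≤ 2 * δ ^ 2 * N := by
        calc C₂ * Real.log q * ((n * r * d : ℕ) : ℝ)
            = (C₂ * γ * n * r * d) * (2 * δ ^ 2) := by rw [← hγ2]; push_cast; ring
          _ ≤ (N:ℝ) * (2 * δ ^ 2) := mul_le_mul_of_nonneg_right hmn (by positivity)
          _ = 2 * δ ^ 2 * N := by ring
      have h4 : (n:ℝ) ≤ ((n * r * d : ℕ) : ℝ) := by
        have h5 : n ≤ n * r * d := by
          calc n = n * 1 * 1 := by ring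
            _ ≤ n * r * d := Nat.mul_le_mul (Nat.mul_le_mul_left n hr) (Nat.one_le_of_lt hd)
        exact_mod_cast h5
      nlinarith [mul_nonneg (mul_nonneg (by linarith : (0:ℝ) ≤ C₂ - 1) hlogq.le)
        (by linarith : (0:ℝ) ≤ ((n * r * d : ℕ) : ℝ) - n), h3]
    -- combine
    calc ∑ M : Fin N → Tensor q n d, ∑ z : Fin N → ZMod q,
          (∏ k, noiseW q ε (z k)) *
            (if (τ < hammingDist (fun k => tinner (M k) (Tstar n))
                    (fun k => tinner (M k) (Tstar n) + z k) ∨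
                  ∃ T : Tensor q n d, T ≠ Tstar n ∧ rankLE q n d r T ∧
                    hammingDist (fun k => tinner (M k) T)
                      (fun k => tinner (M k) (Tstar n) + z k) ≤ τ)
              then 1 else 0)
        ≤ ∑ M : Fin N → Tensor q n d, ∑ z : Fin N → ZMod q,
            ((∏ k, noiseW q ε (z k)) *
              (if τ < hammingDist (fun k => tinner (M k) (Tstar n))
                  (fun k => tinner (M k) (Tstar n) + z k) then (1:ℝ) else 0)
            + (∏ k, noiseW q ε (z k)) *
              (if ∃ T : Tensor q n d, T ≠ Tstar n ∧ rankLE q n d r T ∧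
                    hammingDist (fun k => tinner (M k) T)
                      (fun k => tinner (M k) (Tstar n) + z k) ≤ τ then (1:ℝ) else 0)) := by
          apply Finset.sum_le_sum; intro M _
          apply Finset.sum_le_sum; intro z _
          exact hsplit M z
      _ = (∑ M : Fin N → Tensor q n d, ∑ z : Fin N → ZMod q,
            (∏ k, noiseW q ε (z k)) *
              (if τ < hammingDist (fun k => tinner (M k) (Tstar n))
                  (fun k => tinner (M k) (Tstar n) + z k) then (1:ℝ) else 0))
          + ∑ M : Fin N → Tensor q n d, ∑ z : Fin N → ZMod q,
              (∏ k, noiseW q ε (z k)) *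
                (if ∃ T : Tensor q n d, T ≠ Tstar n ∧ rankLE q n d r T ∧
                      hammingDist (fun k => tinner (M k) T)
                        (fun k => tinner (M k) (Tstar n) + z k) ≤ τ then (1:ℝ) else 0) := by
          rw [← Finset.sum_add_distrib]
          apply Finset.sum_congr rfl
          intro M _
          rw [← Finset.sum_add_distrib]
      _ ≤ (Fintype.card (Tensor q n d) : ℝ) ^ N * Real.exp (-2 * (η - ε) ^ 2 * N)
          + (Fintype.card (Tensor q n d) : ℝ) ^ N *
              ((q:ℝ) ^ (n * r * d) * Real.exp (-2 * δ ^ 2 * N)) := add_le_add hS1 hS2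
      _ ≤ (Fintype.card (Tensor q n d) : ℝ) ^ N * Real.exp (-(a₁ * n))
          + (Fintype.card (Tensor q n d) : ℝ) ^ N * Real.exp (-(a₂ * n)) :=
          add_le_add (mul_le_mul_of_nonneg_left hcomp1 hQN.le)
            (mul_le_mul_of_nonneg_left hcomp2 hQN.le)
      _ = (Real.exp (-(a₁ * n)) + Real.exp (-(a₂ * n))) *
            (Fintype.card (Tensor q n d) : ℝ) ^ N := by ring
  -- conclusion by squeezing
  have hg : Filter.Tendsto
      (fun n : ℕ => Real.exp (-(a₁ * n)) + Real.exp (-(a₂ * n)))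
      Filter.atTop (nhds 0) := by
    have h1 : Filter.Tendsto (fun n : ℕ => Real.exp (-(a₁ * n))) Filter.atTop (nhds 0) :=
      Real.tendsto_exp_atBot.comp (Filter.tendsto_neg_atTop_atBot.comp
        (Filter.Tendsto.const_mul_atTop ha₁pos tendsto_natCast_atTop_atTop))
    have h2 : Filter.Tendsto (fun n : ℕ => Real.exp (-(a₂ * n))) Filter.atTop (nhds 0) :=
      Real.tendsto_exp_atBot.comp (Filter.tendsto_neg_atTop_atBot.comp
        (Filter.Tendsto.const_mul_atTop ha₂pos tendsto_natCast_atTop_atTop))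
    simpa using h1.add h2
  exact squeeze_zero' (Filter.Eventually.of_forall nonneg)
    (Filter.eventually_atTop.mpr ⟨1, key⟩) hg
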